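/- Let h_i ∈ C²(ℝ,ℝ) with |h_i'| ≤ D_h and |h_i''| ≤ M_h uniformly. Then the map u ↦ h(u) ∈ L₂(ℓ²) is Fréchet differentiable with derivative Dh(u) ∈ L(ℓ², L₂(ℓ²)) given by (Dh(u)v)w = (h_i'(u_i) v_i w_i)_{i∈ℤ}, satisfying ‖h(u+v) - h(u) - Dh(u)v‖_{L₂(ℓ²)} ≤ (M_h/2)‖v‖². -/

import Mathlib

open Set

private lemma taylor_quad_nonneg {f f' : ℝ → ℝ} {C : NNReal}
    (hf : ∀ y, HasDerivAt f (f' y) y) (hlip : LipschitzWith C f')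
    (x t : ℝ) (ht : 0 ≤ t) :
    |f (x + t) - f x - f' x * t| ≤ (C : ℝ) / 2 * t ^ 2 := by
  set g : ℝ → ℝ := fun s => f (x + s) - f x - f' x * s with hgdef
  have hg' : ∀ s, HasDerivAt g (f' (x + s) - f' x) s := by
    intro s
    have h1 : HasDerivAt (fun s => f (x + s)) (f' (x + s)) s := by
      have := (hf (x + s)).comp s ((hasDerivAt_id s).const_add x)
      simp only [mul_one] at this
      exact this
    have := (h1.sub_const (f x)).sub ((hasDerivAt_id s).const_mul (f' x))
    simp only [mul_one] at this
    exact this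
  have hB : ∀ s : ℝ, HasDerivAt (fun s => (C : ℝ) / 2 * s ^ 2) ((C : ℝ) * s) s := by
    intro s
    have := (hasDerivAt_pow 2 s).const_mul ((C : ℝ) / 2)
    exact this.congr_deriv (by rw [show (2:ℕ) - 1 = 1 by norm_num]; push_cast; ring)
  have bound : ∀ s ∈ Ico (0 : ℝ) t, ‖f' (x + s) - f' x‖ ≤ (C : ℝ) * s := by
    intro s hs
    have := hlip.dist_le_mul (x + s) x
    simp only [Real.dist_eq, add_sub_cancel_left] at this
    rw [Real.norm_eq_abs]
    calc |f' (x + s) - f' x| ≤ (C : ℝ) * |s| := this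
      _ = (C : ℝ) * s := by rw [abs_of_nonneg hs.1]
  have key := image_norm_le_of_norm_deriv_right_le_deriv_boundary
    (f := g) (f' := fun s => f' (x + s) - f' x) (a := 0) (b := t)
    (fun s _ => (hg' s).continuousAt.continuousWithinAt)
    (fun s _ => (hg' s).hasDerivWithinAt)
    (by simp [hgdef]) hB bound (right_mem_Icc.mpr ht)
  simpa [hgdef, Real.norm_eq_abs] using key

private lemma taylor_quad {f f' : ℝ → ℝ} {C : NNReal}
    (hf : ∀ y, HasDerivAt f (f' y) y) (hlip : LipschitzWith C f')
    (x t : ℝ) :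
    |f (x + t) - f x - f' x * t| ≤ (C : ℝ) / 2 * t ^ 2 := by
  rcases le_or_gt 0 t with ht | ht
  · exact taylor_quad_nonneg hf hlip x t ht
  · have hF : ∀ y : ℝ, HasDerivAt (fun s => f (2 * x - s)) (-f' (2 * x - y)) y := by
      intro y
      have := (hf (2 * x - y)).comp y ((hasDerivAt_id y).const_sub (2 * x))
      simp only [mul_neg, mul_one] at this
      exact this
    have hFlip : LipschitzWith C fun y : ℝ => -f' (2 * x - y) := by
      have h1 : LipschitzWith 1 fun y : ℝ => 2 * x - y := by
        apply LipschitzWith.of_dist_le_mul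
        intro a b
        rw [Real.dist_eq, Real.dist_eq, NNReal.coe_one, one_mul,
          show 2 * x - a - (2 * x - b) = -(a - b) by ring, abs_neg]
      apply LipschitzWith.of_dist_le_mul
      intro a b
      have hb := (hlip.comp h1).dist_le_mul a b
      simp only [Function.comp_apply, NNReal.coe_mul, NNReal.coe_one, mul_one] at hb
      calc dist (-f' (2 * x - a)) (-f' (2 * x - b))
          = dist (f' (2 * x - a)) (f' (2 * x - b)) := by
            rw [Real.dist_eq, Real.dist_eq,
              show -f' (2 * x - a) - -f' (2 * x - b)
                = -(f' (2 * x - a) - f' (2 * x - b)) by ring, abs_neg]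
        _ ≤ (C : ℝ) * dist a b := hb
    have e := taylor_quad_nonneg hF hFlip x (-t) (by linarith)
    have e1 : 2 * x - (x + -t) = x + t := by ring
    have e2 : 2 * x - x = x := by ring
    rw [e1, e2] at e
    calc |f (x + t) - f x - f' x * t| = |f (x + t) - f x - -f' x * -t| := by ring_nf
      _ ≤ (C : ℝ) / 2 * (-t) ^ 2 := e
      _ = (C : ℝ) / 2 * t ^ 2 := by ring

/-- For `h_i ∈ C²(ℝ)` with `|h_i'| ≤ D_h` and `|h_i''| ≤ M_h`, the diagonal
Nemytskii operator `u ↦ h(u) ∈ L₂(ℓ²)` has candidate derivative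
`(Dh(u)v)w = (h_i'(u_i)v_iw_i)_i`, and (in the Hilbert–Schmidt norm, computed over
diagonal entries) `‖h(u+v) - h(u) - Dh(u)v‖_{L₂(ℓ²)} ≤ (M_h/2)‖v‖²`. -/
theorem stmt12 (h : ℤ → ℝ → ℝ) (Dh Mh : ℝ) (hDh : 0 ≤ Dh) (hMh : 0 ≤ Mh)
    (hC2 : ∀ i : ℤ, ContDiff ℝ 2 (h i))
    (hsum : Summable fun i : ℤ => (h i 0) ^ 2)
    (hder : ∀ i : ℤ, ∀ ζ : ℝ, |deriv (h i) ζ| ≤ Dh)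
    (hder2 : ∀ i : ℤ, ∀ ζ : ℝ, |deriv (deriv (h i)) ζ| ≤ Mh) :
    ∀ u v : lp (fun _ : ℤ => ℝ) 2,
      Real.sqrt (∑' i : ℤ, (h i (u i + v i) - h i (u i) - deriv (h i) (u i) * v i) ^ 2) ≤
        (Mh / 2) * ‖v‖ ^ 2 := by
  intro u v
  -- pointwise Taylor estimate
  have hpt : ∀ i : ℤ, |h i (u i + v i) - h i (u i) - deriv (h i) (u i) * v i|
      ≤ Mh / 2 * (v i) ^ 2 := by
    intro i
    have hdiff : Differentiable ℝ (h i) := (hC2 i).differentiable (by norm_num)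
    have hderivC : ContDiff ℝ 1 (deriv (h i)) := by
      have hd2 : ContDiff ℝ ((1 : WithTop ℕ∞) + 1) (h i) := by
        rw [show ((1 : WithTop ℕ∞) + 1) = 2 by norm_num]
        exact hC2 i
      exact (contDiff_succ_iff_deriv.mp hd2).2.2
    have hderivD : Differentiable ℝ (deriv (h i)) := hderivC.differentiable (by norm_num)
    have hlip : LipschitzWith Mh.toNNReal (deriv (h i)) := by
      apply lipschitzWith_of_nnnorm_deriv_le hderivD
      intro x
      refine NNReal.coe_le_coe.mp ?_
      rw [Real.coe_toNNReal _ hMh]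
      simpa [Real.norm_eq_abs] using hder2 i x
    have hf : ∀ y, HasDerivAt (h i) (deriv (h i) y) y := fun y =>
      (hdiff y).hasDerivAt
    have := taylor_quad hf hlip (u i) (v i)
    rwa [Real.coe_toNNReal _ hMh] at this
  -- summation
  set c : ℤ → ℝ := fun i => (v i) ^ 2 with hcdef
  have hcnn : ∀ i, 0 ≤ c i := fun i => sq_nonneg _
  have hcsum : Summable c := by
    have hm : Memℓp (fun i => v i) 2 := lp.memℓp v
    have := (memℓp_gen_iff (p := 2) (by norm_num)).mp hm
    have h2 : ((2 : ENNReal).toReal) = (2 : ℝ) := by norm_num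
    simpa [hcdef, h2, Real.rpow_two, Real.norm_eq_abs, sq_abs] using this
  obtain ⟨T, hTdef⟩ : ∃ T : ℝ, T = ∑' i, c i := ⟨_, rfl⟩
  have hTnn : 0 ≤ T := hTdef ▸ tsum_nonneg hcnn
  have hnorm : ‖v‖ ^ 2 = T := by
    have := lp.norm_rpow_eq_tsum (p := 2) (by norm_num) v
    have h2 : ((2 : ENNReal).toReal) = (2 : ℝ) := by norm_num
    rw [h2] at this
    rw [hTdef]
    calc ‖v‖ ^ 2 = ‖v‖ ^ (2 : ℝ) := by rw [Real.rpow_two]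
      _ = ∑' i, ‖v i‖ ^ (2 : ℝ) := this
      _ = ∑' i, c i := by
          congr 1; funext i; rw [Real.rpow_two, hcdef]; simp [sq_abs]
  have hcleT : ∀ i, c i ≤ T := fun i => hTdef ▸ Summable.le_tsum hcsum i fun j _ => hcnn j
  have hbsum : Summable fun i => (Mh / 2) ^ 2 * (c i * T) :=
    (hcsum.mul_right T).mul_left _
  have hab : ∀ i, (h i (u i + v i) - h i (u i) - deriv (h i) (u i) * v i) ^ 2
      ≤ (Mh / 2) ^ 2 * (c i * T) := by
    intro i
    have h1 : (h i (u i + v i) - h i (u i) - deriv (h i) (u i) * v i) ^ 2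
        ≤ (Mh / 2 * c i) ^ 2 := by
      rw [← sq_abs]
      exact pow_le_pow_left₀ (abs_nonneg _) (hpt i) 2
    calc _ ≤ (Mh / 2 * c i) ^ 2 := h1
      _ = (Mh / 2) ^ 2 * (c i * c i) := by ring
      _ ≤ (Mh / 2) ^ 2 * (c i * T) := by
          gcongr
          exact hcleT i
  have hasum : Summable fun i => (h i (u i + v i) - h i (u i) - deriv (h i) (u i) * v i) ^ 2 :=
    Summable.of_nonneg_of_le (fun i => sq_nonneg _) hab hbsum
  have htsum_le : (∑' i, (h i (u i + v i) - h i (u i) - deriv (h i) (u i) * v i) ^ 2)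
      ≤ (Mh / 2 * T) ^ 2 := by
    calc _ ≤ ∑' i, (Mh / 2) ^ 2 * (c i * T) := Summable.tsum_le_tsum hab hasum hbsum
      _ = (Mh / 2) ^ 2 * (T * T) := by
          rw [tsum_mul_left, tsum_mul_right, ← hTdef]
      _ = (Mh / 2 * T) ^ 2 := by ring
  calc Real.sqrt (∑' i, (h i (u i + v i) - h i (u i) - deriv (h i) (u i) * v i) ^ 2)
      ≤ Real.sqrt ((Mh / 2 * T) ^ 2) := Real.sqrt_le_sqrt htsum_le
    _ = Mh / 2 * T := Real.sqrt_sq (by positivity)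
    _ = Mh / 2 * ‖v‖ ^ 2 := by rw [hnorm]
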